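/- The complete k-partite graph K_{n₁,…,n_k} with all part sizes n_i ≥ 2 has boxicity exactly k. -/
import Mathlib


open SimpleGraph Finset

/-- A representation of `G` as intersection graph of boxes in `ℝ^ℓ`
(products of `ℓ` closed bounded intervals). -/
def BoxRep {V : Type*} (G : SimpleGraph V) (ℓ : ℕ) : Prop :=
  ∃ f : V → Fin ℓ → ℝ × ℝ,
    (∀ v i, (f v i).1 ≤ (f v i).2) ∧
    ∀ u v : V, u ≠ v →
      (G.Adj u v ↔ ∀ i, max (f u i).1 (f v i).1 ≤ min (f u i).2 (f v i).2)

/-- The boxicity of a graph: the least positive `ℓ` admitting a box representation. -/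
noncomputable def boxicity {V : Type*} (G : SimpleGraph V) : ℕ :=
  sInf {ℓ : ℕ | 0 < ℓ ∧ BoxRep G ℓ}

/-- A graph is an interval graph iff it has a box representation in dimension 1. -/
def IsIntervalGraph {V : Type*} (G : SimpleGraph V) : Prop := BoxRep G 1

/-- A graph is not complete. -/
def NotComplete {V : Type*} (G : SimpleGraph V) : Prop := ∃ a b : V, a ≠ b ∧ ¬ G.Adj a b

/-- The circular clique `G_k^d`: vertices `a_0, …, a_{k-1}`, with `a_i ~ a_j`
iff `d ≤ |i - j| ≤ k - d`. -/
def circularClique (k d : ℕ) : SimpleGraph (Fin k) :=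
  SimpleGraph.fromRel (fun i j =>
    d ≤ ((i : ℤ) - (j : ℤ)).natAbs ∧ ((i : ℤ) - (j : ℤ)).natAbs ≤ k - d)

/-- The `G`-generalized join `G[H₁, …, Hₙ]`. -/
def genJoin {n : ℕ} {V : Fin n → Type*} (G : SimpleGraph (Fin n))
    (H : ∀ i, SimpleGraph (V i)) : SimpleGraph (Σ i, V i) :=
  SimpleGraph.fromRel (fun x y =>
    G.Adj x.1 y.1 ∨ ∃ h : x.1 = y.1, (H y.1).Adj (h ▸ x.2) y.2)

/-- The join `G ∨ H` of two disjoint graphs. -/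
def graphJoin {α β : Type*} (G : SimpleGraph α) (H : SimpleGraph β) :
    SimpleGraph (α ⊕ β) :=
  SimpleGraph.fromRel (fun x y =>
    match x, y with
    | .inl a, .inl b => G.Adj a b
    | .inr a, .inr b => H.Adj a b
    | _, _ => True)

/-- The equivalence `x ∼ y ↔ N(x) = N(y)` (equal open neighborhoods). -/
def nbhdSetoid {V : Type*} (G : SimpleGraph V) : Setoid V :=
  ⟨fun x y => G.neighborSet x = G.neighborSet y,
    ⟨fun _ => rfl, Eq.symm, Eq.trans⟩⟩

/-- The reduced graph of `G`: vertices are the classes of `nbhdSetoid G`,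
with `[x] ~ [y]` iff `x ~ y` in `G`. -/
def reducedGraph {V : Type*} (G : SimpleGraph V) :
    SimpleGraph (Quotient (nbhdSetoid G)) :=
  SimpleGraph.fromRel (fun a b =>
    ∃ x y : V, Quotient.mk (nbhdSetoid G) x = a ∧ Quotient.mk (nbhdSetoid G) y = b ∧ G.Adj x y)

/-- The zero-divisor graph of a commutative ring: vertices are the nonzero
zero-divisors, with `x ~ y` iff `x * y = 0`. -/
def zeroDivisorGraph (R : Type*) [CommRing R] :
    SimpleGraph {x : R // x ≠ 0 ∧ ∃ y : R, y ≠ 0 ∧ x * y = 0} :=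
  SimpleGraph.fromRel (fun x y => (x : R) * (y : R) = 0)

/-- Equivalence on a ring: equal annihilators. -/
def annSetoid (R : Type*) [CommRing R] : Setoid R :=
  ⟨fun x y => ∀ r : R, x * r = 0 ↔ y * r = 0,
    ⟨fun _ _ => Iff.rfl, fun h r => (h r).symm, fun h h' r => (h r).trans (h' r)⟩⟩

/-- Vertices of the compressed zero-divisor graph: annihilator classes
other than the class of `0` and the class of `1`. -/
def CompressedVertex (R : Type*) [CommRing R] : Type _ :=
  {c : Quotient (annSetoid R) //
    c ≠ Quotient.mk (annSetoid R) 0 ∧ c ≠ Quotient.mk (annSetoid R) 1}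

/-- The compressed zero-divisor graph `Γ_E(R)`. -/
def compressedZDG (R : Type*) [CommRing R] : SimpleGraph (CompressedVertex R) :=
  SimpleGraph.fromRel (fun c c' =>
    ∃ x y : R, Quotient.mk (annSetoid R) x = c.1 ∧ Quotient.mk (annSetoid R) y = c'.1 ∧ x * y = 0)

/-- The graph of proper divisors of `N` (`1 < d < N`), `d ~ d'` iff `N ∣ d * d'`;
this is the compressed zero-divisor graph of `ℤ_N`. -/
def divisorGraph (N : ℕ) : SimpleGraph {d : ℕ // d ∣ N ∧ 1 < d ∧ d < N} :=
  SimpleGraph.fromRel (fun d e => N ∣ d.1 * e.1)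

private lemma interval_disj {a b c d : ℝ} (ha : a ≤ b) (hc : c ≤ d)
    (h : min b d < max a c) : b < c ∨ d < a := by
  by_contra h'
  push_neg at h'
  have := max_le (le_min ha h'.2) (le_min h'.1 hc)
  exact absurd h (not_lt.mpr this)

private lemma four_intervals (A B C D : ℝ × ℝ)
    (hA : A.1 ≤ A.2) (hB : B.1 ≤ B.2) (hC : C.1 ≤ C.2) (hD : D.1 ≤ D.2)
    (hAB : min A.2 B.2 < max A.1 B.1) (hCD : min C.2 D.2 < max C.1 D.1)
    (hAC : max A.1 C.1 ≤ min A.2 C.2) (hAD : max A.1 D.1 ≤ min A.2 D.2)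
    (hBC : max B.1 C.1 ≤ min B.2 C.2) (hBD : max B.1 D.1 ≤ min B.2 D.2) :
    False := by
  have h1 : A.1 ≤ C.2 ∧ C.1 ≤ A.2 :=
    ⟨le_trans (le_max_left _ _) (le_trans hAC (min_le_right _ _)),
     le_trans (le_max_right _ _) (le_trans hAC (min_le_left _ _))⟩
  have h2 : A.1 ≤ D.2 ∧ D.1 ≤ A.2 :=
    ⟨le_trans (le_max_left _ _) (le_trans hAD (min_le_right _ _)),
     le_trans (le_max_right _ _) (le_trans hAD (min_le_left _ _))⟩
  have h3 : B.1 ≤ C.2 ∧ C.1 ≤ B.2 :=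
    ⟨le_trans (le_max_left _ _) (le_trans hBC (min_le_right _ _)),
     le_trans (le_max_right _ _) (le_trans hBC (min_le_left _ _))⟩
  have h4 : B.1 ≤ D.2 ∧ D.1 ≤ B.2 :=
    ⟨le_trans (le_max_left _ _) (le_trans hBD (min_le_right _ _)),
     le_trans (le_max_right _ _) (le_trans hBD (min_le_left _ _))⟩
  rcases interval_disj hA hB hAB with hab | hab <;>
    rcases interval_disj hC hD hCD with hcd | hcd <;>
      [linarith [h2.2, h3.1]; linarith [h1.2, h4.1]; linarith [h4.2, h1.1];
       linarith [h3.2, h2.1]]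

/-- The complete `k`-partite graph with all parts of size at least 2 has boxicity `k`. -/
theorem boxicity_completeMultipartite (k : ℕ) (hk : 0 < k) (n : Fin k → ℕ)
    (hn : ∀ i, 2 ≤ n i) :
    boxicity (completeMultipartiteGraph (fun i : Fin k => Fin (n i))) = k := by
  set G := completeMultipartiteGraph (fun i : Fin k => Fin (n i)) with hG
  have hadj : ∀ u v : Σ i, Fin (n i), G.Adj u v ↔ u.1 ≠ v.1 := fun u v => Iff.rfl
  -- the box representation in dimension k
  have hrep : BoxRep G k := by
    refine ⟨fun v i => if v.1 = i then ((v.2 : ℝ) / n v.1, (v.2 : ℝ) / n v.1)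
      else (0, 1), ?_, ?_⟩
    · intro v i
      by_cases h : v.1 = i <;> simp [h] <;> norm_num
    · rintro ⟨i, a⟩ ⟨j, b⟩ huv
      have hpos : ∀ l : Fin k, (0:ℝ) < n l := fun l => by
        have := hn l; positivity
      have hin : ∀ (l : Fin k) (c : Fin (n l)),
          (0:ℝ) ≤ (c:ℝ) / n l ∧ (c:ℝ) / n l ≤ 1 := by
        intro l c
        constructor
        · positivity
        · rw [div_le_one (hpos l)]
          exact_mod_cast (c.2.le)
      constructor
      · intro hij c
        have hij' : i ≠ j := hij
        by_cases h1 : i = c <;> by_cases h2 : j = c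
        · exact absurd (h1.trans h2.symm) hij'
        · subst h1
          simp only [if_pos rfl, if_neg h2, if_true]
          exact max_le (le_min le_rfl (hin i a).2) (le_min (hin i a).1 zero_le_one)
        · subst h2
          simp only [if_pos rfl, if_neg h1, if_true]
          exact max_le (le_min zero_le_one (hin j b).1) (le_min (hin j b).2 le_rfl)
        · simp [h1, h2]
      · intro hall
        by_contra hij
        simp only [hadj, ne_eq, not_not] at hij
        subst hij
        have hab : a ≠ b := fun h => huv (by rw [h])
        have := hall i
        simp only [if_pos rfl] at this
        have h1 : ((a:ℝ)/n i) ≤ ((b:ℝ)/n i) :=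
          le_trans (le_max_left _ _) (le_trans this (min_le_right _ _))
        have h2 : ((b:ℝ)/n i) ≤ ((a:ℝ)/n i) :=
          le_trans (le_max_right _ _) (le_trans this (min_le_left _ _))
        have hpos : (0:ℝ) < n i := by have := hn i; positivity
        have hq : ((a:ℕ):ℝ) = ((b:ℕ):ℝ) := by
          have h := le_antisymm h1 h2
          field_simp at h
          exact_mod_cast h
        exact hab (Fin.ext (by exact_mod_cast hq))
  refine le_antisymm (Nat.sInf_le ⟨hk, hrep⟩) ?_
  refine le_csInf ⟨k, hk, hrep⟩ ?_
  rintro ℓ ⟨hℓ, f, hf, hiff⟩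
  by_contra hlt
  push_neg at hlt
  -- for each part, pick two vertices and a coordinate separating them
  have key : ∀ i : Fin k, ∃ c : Fin ℓ,
      min (f ⟨i, ⟨0, by have := hn i; omega⟩⟩ c).2 (f ⟨i, ⟨1, by have := hn i; omega⟩⟩ c).2 <
      max (f ⟨i, ⟨0, by have := hn i; omega⟩⟩ c).1 (f ⟨i, ⟨1, by have := hn i; omega⟩⟩ c).1 := by
    intro i
    set A : Σ j, Fin (n j) := ⟨i, ⟨0, by have := hn i; omega⟩⟩
    set B : Σ j, Fin (n j) := ⟨i, ⟨1, by have := hn i; omega⟩⟩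
    have hne : A ≠ B := by
      intro h
      have : (⟨0, by have := hn i; omega⟩ : Fin (n i)) = ⟨1, by have := hn i; omega⟩ :=
        by simpa [A, B] using h
      simp [Fin.ext_iff] at this
    have hnadj : ¬ G.Adj A B := by simp [hadj, A, B]
    have := (hiff A B hne).not.mp hnadj
    push_neg at this
    obtain ⟨c, hc⟩ := this
    exact ⟨c, hc⟩
  choose c hc using key
  obtain ⟨i, j, hij, hcij⟩ :=
    Fintype.exists_ne_map_eq_of_card_lt c (by simpa using hlt)
  set A : Σ l, Fin (n l) := ⟨i, ⟨0, by have := hn i; omega⟩⟩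
  set B : Σ l, Fin (n l) := ⟨i, ⟨1, by have := hn i; omega⟩⟩
  set C : Σ l, Fin (n l) := ⟨j, ⟨0, by have := hn j; omega⟩⟩
  set D : Σ l, Fin (n l) := ⟨j, ⟨1, by have := hn j; omega⟩⟩
  have hAC : G.Adj A C := hij
  have hAD : G.Adj A D := hij
  have hBC : G.Adj B C := hij
  have hBD : G.Adj B D := hij
  have hneAC : A ≠ C := fun h => hij (congrArg Sigma.fst h)
  have hneAD : A ≠ D := fun h => hij (congrArg Sigma.fst h)
  have hneBC : B ≠ C := fun h => hij (congrArg Sigma.fst h)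
  have hneBD : B ≠ D := fun h => hij (congrArg Sigma.fst h)
  exact four_intervals (f A (c i)) (f B (c i)) (f C (c i)) (f D (c i))
    (hf A _) (hf B _) (hf C _) (hf D _)
    (hc i) (hcij ▸ hc j)
    ((hiff A C hneAC).mp hAC (c i))
    ((hiff A D hneAD).mp hAD (c i))
    ((hiff B C hneBC).mp hBC (c i))
    ((hiff B D hneBD).mp hBD (c i))
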